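/- Fix a ∈ (0,1] and a sequence α_1, α_2, ... with α_n ∈ [a,1] for all n. Let the nested designs X_n be generated by the relaxed greedy-packing algorithm: x_1 ∈ X is arbitrary and for each n ≥ 1, x_{n+1} is any point of X with min_{x_i∈X_n} ‖x_{n+1} − x_i‖ ≥ α_n·CR(X_n). Then for all n ≥ 2, SR(X_n) ≥ (a/2)·CR(X_{n-1}). -/

import Mathlib

open Metric Set MeasureTheory

/-- Distance from a point `x` to the nearest point of the design `D`. -/
noncomputable def minDist {E : Type*} [NormedAddCommGroup E] (D : Finset E) (x : E) : ℝ :=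
  sInf ((fun p => dist x p) '' (D : Set E))

/-- Fill distance (covering radius) of the design `D` for the set `A`:
`CR_A(D) = sup_{x ∈ A} min_{p ∈ D} ‖x - p‖`. -/
noncomputable def fillDist {E : Type*} [NormedAddCommGroup E] (A : Set E) (D : Finset E) : ℝ :=
  sSup ((fun x => minDist D x) '' A)

/-- Separation radius of the design `D`:
`SR(D) = (1/2) min_{p ≠ q ∈ D} ‖p - q‖`. -/
noncomputable def sepRad {E : Type*} [NormedAddCommGroup E] (D : Finset E) : ℝ :=
  (1 / 2) * sInf ((fun p : E × E => dist p.1 p.2) '' {p | p.1 ∈ D ∧ p.2 ∈ D ∧ p.1 ≠ p.2})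

/-- Mesh-ratio of the design `D` for the set `A`: `MR(D) = CR_A(D) / SR(D)`. -/
noncomputable def meshRatio {E : Type*} [NormedAddCommGroup E] (A : Set E) (D : Finset E) : ℝ :=
  fillDist A D / sepRad D

/-- The nested design consisting of the first `n` points of the sequence `x`. -/
noncomputable def design {E : Type*} (x : ℕ → E) (n : ℕ) : Finset E :=
  letI := Classical.decEq E
  (Finset.range n).image x

section Aux
variable {E : Type*} [NormedAddCommGroup E]

lemma minDist_le {D : Finset E} {p : E} (hp : p ∈ D) (y : E) :
    minDist D y ≤ dist y p := by
  apply csInf_le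
  · exact ⟨0, by rintro _ ⟨q, hq, rfl⟩; positivity⟩
  · exact ⟨p, hp, rfl⟩

lemma minDist_nonneg (D : Finset E) (y : E) :
    0 ≤ minDist D y := by
  apply Real.sInf_nonneg
  rintro _ ⟨q, hq, rfl⟩; positivity

lemma minDist_anti {D D' : Finset E} (h : D ⊆ D') (hD : D.Nonempty) (y : E) :
    minDist D' y ≤ minDist D y := by
  apply csInf_le_csInf
  · exact ⟨0, by rintro _ ⟨q, hq, rfl⟩; positivity⟩
  · obtain ⟨p, hp⟩ := hD
    exact ⟨dist y p, p, hp, rfl⟩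
  · exact Set.image_mono (by exact_mod_cast h)

lemma fillDist_nonneg {S : Set E} {D : Finset E} : 0 ≤ fillDist S D := by
  apply Real.sSup_nonneg
  rintro _ ⟨y, hy, rfl⟩
  exact minDist_nonneg D y

lemma bddAbove_minDist_image {S : Set E} (hS : IsCompact S) {D : Finset E}
    {p : E} (hp : p ∈ D) : BddAbove ((fun y => minDist D y) '' S) := by
  obtain ⟨R, hR⟩ := hS.isBounded.subset_closedBall p
  refine ⟨R, ?_⟩
  rintro _ ⟨y, hy, rfl⟩
  exact (minDist_le hp y).trans (by simpa [Metric.mem_closedBall] using hR hy)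

lemma fillDist_anti {S : Set E} (hS : IsCompact S) (hSne : S.Nonempty)
    {D D' : Finset E} (h : D ⊆ D') (hD : D.Nonempty) :
    fillDist S D' ≤ fillDist S D := by
  obtain ⟨p, hp⟩ := hD
  apply csSup_le (hSne.image _)
  rintro _ ⟨y, hy, rfl⟩
  exact (minDist_anti h ⟨p, hp⟩ y).trans
    (le_csSup (bddAbove_minDist_image hS hp) ⟨y, hy, rfl⟩)

lemma mem_design {x : ℕ → E} {i n : ℕ} (hi : i < n) : x i ∈ design x n := by
  classical
  simp only [design, Finset.mem_image]
  exact ⟨i, Finset.mem_range.2 hi, rfl⟩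

lemma design_subset {x : ℕ → E} {m n : ℕ} (h : m ≤ n) : design x m ⊆ design x n := by
  classical
  simp only [design]
  intro y hy
  simp only [Finset.mem_image, Finset.mem_range] at hy ⊢
  obtain ⟨i, hi, rfl⟩ := hy
  exact ⟨i, hi.trans_le h, rfl⟩

end Aux

/-- Fix `a ∈ (0,1]` and `αₖ ∈ [a,1]`. If the nested designs `Xₙ` are
generated by the relaxed greedy-packing algorithm (the `(k+1)`-th point `x k` lies in `S` and
satisfies `min_{x_i ∈ X_k} ‖x_{k+1} − x_i‖ ≥ αₖ·CR(X_k)`), then for all `n ≥ 2`,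
`SR(Xₙ) ≥ (a/2)·CR(X_{n−1})`. -/
theorem statement11 {d : ℕ} (hd : 1 ≤ d)
    {E : Type*} [NormedAddCommGroup E] [NormedSpace ℝ E] [FiniteDimensional ℝ E]
    (hdim : Module.finrank ℝ E = d)
    (S : Set E) (hS : IsCompact S)
    (a : ℝ) (ha : a ∈ Set.Ioc (0 : ℝ) 1) (α : ℕ → ℝ) (hα : ∀ k, α k ∈ Set.Icc a 1)
    (x : ℕ → E) (hinj : Function.Injective x) (hx0 : x 0 ∈ S)
    (hrelax : ∀ k : ℕ, 1 ≤ k →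
      x k ∈ S ∧ α k * fillDist S (design x k) ≤ minDist (design x k) (x k))
    (n : ℕ) (hn : 2 ≤ n) :
    (a / 2) * fillDist S (design x (n - 1)) ≤ sepRad (design x n) := by
  obtain ⟨ha0, ha1⟩ := ha
  have hSne : S.Nonempty := ⟨x 0, hx0⟩
  have key : ∀ i j : ℕ, i < j → j < n →
      a * fillDist S (design x (n - 1)) ≤ dist (x j) (x i) := by
    intro i j hij hjn
    have hj1 : 1 ≤ j := by omega
    obtain ⟨-, hmin⟩ := hrelax j hj1
    have hsub : design x j ⊆ design x (n - 1) := design_subset (by omega)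
    have hdne : (design x j).Nonempty := ⟨x 0, mem_design (by omega)⟩
    have h1 : fillDist S (design x (n - 1)) ≤ fillDist S (design x j) :=
      fillDist_anti hS hSne hsub hdne
    have h2 : a * fillDist S (design x (n - 1)) ≤ α j * fillDist S (design x j) :=
      mul_le_mul (hα j).1 h1 fillDist_nonneg (le_trans ha0.le (hα j).1)
    exact h2.trans (hmin.trans (minDist_le (mem_design hij) (x j)))
  have main : a * fillDist S (design x (n - 1)) ≤
      sInf ((fun p : E × E => dist p.1 p.2) ''
        {p | p.1 ∈ design x n ∧ p.2 ∈ design x n ∧ p.1 ≠ p.2}) := by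
    apply le_csInf
    · have hne01 : x 0 ≠ x 1 := fun h => absurd (hinj h) (by omega)
      exact ⟨dist (x 0) (x 1), ⟨(x 0, x 1), ⟨mem_design (by omega), mem_design (by omega),
        hne01⟩, rfl⟩⟩
    rintro _ ⟨⟨p, q⟩, ⟨hp, hq, hne⟩, rfl⟩
    classical
    simp only [design, Finset.mem_image, Finset.mem_range] at hp hq
    obtain ⟨i, hi, rfl⟩ := hp
    obtain ⟨j, hj, rfl⟩ := hq
    have hij : i ≠ j := fun h => hne (by rw [h])
    simp only
    rcases hij.lt_or_gt with h | h
    · rw [dist_comm]; exact key i j h hj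
    · exact key j i h hi
  rw [sepRad]
  calc a / 2 * fillDist S (design x (n - 1))
      = 1 / 2 * (a * fillDist S (design x (n - 1))) := by ring
    _ ≤ _ := by linarith [main]
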